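/- For any Eulerian digraph D, the number of oriented spanning trees of D is independent of the choice of root vertex: for any two vertices r and r' of D, the number of oriented spanning trees rooted at r equals the number rooted at r'. -/

import Mathlib

open Classical

/-- A finite multidigraph: finite vertex and edge types with initial and final
vertex maps. -/
structure Multidigraph where
  V : Type
  E : Type
  [fintV : Fintype V]
  [fintE : Fintype E]
  first : E → V
  last : E → V

attribute [instance] Multidigraph.fintV Multidigraph.fintE

namespace Multidigraph

variable (D : Multidigraph)

/-- The out-degree of a vertex. -/
noncomputable def outdeg (v : D.V) : ℕ := Nat.card {e : D.E // D.first e = v}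

/-- The in-degree of a vertex. -/
noncomputable def indeg (v : D.V) : ℕ := Nat.card {e : D.E // D.last e = v}

/-- Undirected adjacency using only edges in `T`. -/
def Adj (T : Set D.E) (a b : D.V) : Prop :=
  ∃ e ∈ T, (D.first e = a ∧ D.last e = b) ∨ (D.first e = b ∧ D.last e = a)

/-- Undirected reachability using only edges in `T`. -/
def Reach (T : Set D.E) : D.V → D.V → Prop := Relation.ReflTransGen (D.Adj T)

/-- The underlying undirected graph is connected. -/
def Connected : Prop := ∀ a b : D.V, D.Reach Set.univ a b

/-- An Eulerian digraph: connected and with in-degree equal to out-degree at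
every vertex. -/
def Eulerian : Prop := D.Connected ∧ ∀ v : D.V, D.indeg v = D.outdeg v

/-- `T` is a spanning tree of the underlying undirected graph: it connects all
vertices and has `|V| - 1` edges. -/
def IsSpanningTree (T : Set D.E) : Prop :=
  (∀ a b : D.V, D.Reach T a b) ∧ Nat.card T = Nat.card D.V - 1

/-- The out-degree of `v` in the subgraph `T` after reversing the orientations
of the edges in `S`. -/
noncomputable def outdegRev (T S : Set D.E) (v : D.V) : ℕ :=
  Nat.card {e : D.E // (e ∈ T \ S ∧ D.first e = v) ∨ (e ∈ S ∧ D.last e = v)}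

/-- `T` becomes an oriented spanning tree rooted at `r` (every vertex has a
unique directed path to `r`, i.e. every non-root vertex has out-degree `1` and
the root has out-degree `0` in the tree) after reversing exactly the edges of
`S ⊆ T`. -/
def IsOrientedSpanningTreeRev (T S : Set D.E) (r : D.V) : Prop :=
  D.IsSpanningTree T ∧ S ⊆ T ∧ (∀ v : D.V, v ≠ r → D.outdegRev T S v = 1) ∧
    D.outdegRev T S r = 0

/-- `T` is an oriented spanning tree rooted at `r`: every vertex has a unique
directed path to `r`. -/
def IsOrientedSpanningTree (T : Set D.E) (r : D.V) : Prop :=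
  D.IsOrientedSpanningTreeRev T ∅ r

/-- `T` is a `k`-spanning tree rooted at `r`: reversing the orientation of
exactly `k` of its edges yields an oriented spanning tree rooted at `r`. -/
def IsKSpanningTree (T : Set D.E) (r : D.V) (k : ℕ) : Prop :=
  ∃ S : Set D.E, Nat.card S = k ∧ D.IsOrientedSpanningTreeRev T S r

/-- `c D k r` is the number of `k`-spanning trees of `D` rooted at `r`. -/
noncomputable def c (k : ℕ) (r : D.V) : ℕ :=
  Nat.card {T : Set D.E // D.IsKSpanningTree T r k}

/-- The transpose digraph: every edge reversed. -/
def transpose : Multidigraph := { D with first := D.last, last := D.first }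

end Multidigraph


section Stmt2Aux

open Multidigraph Matrix Finset

/-- If all row sums of `M` vanish, the adjugate is constant along its first index. -/
lemma adjugate_row_const {n : Type} [Fintype n] [DecidableEq n] [Nonempty n]
    (M : Matrix n n ℚ) (hrow : ∀ i, ∑ j, M i j = 0) (i i' j : n) :
    M.adjugate i j = M.adjugate i' j := by
  rw [Matrix.adjugate_apply, Matrix.adjugate_apply]
  have h1 : (Pi.single i 1 : n → ℚ) = Pi.single i' 1 + (Pi.single i 1 - Pi.single i' 1) := by
    abel
  rw [h1, Matrix.det_updateRow_add]
  have h0 : (M.updateRow j (Pi.single i 1 - Pi.single i' 1)).det = 0 := by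
    rw [← Matrix.exists_mulVec_eq_zero_iff]
    refine ⟨fun _ => 1, ?_, ?_⟩
    · intro h
      have := congrFun h (Classical.arbitrary n)
      simp at this
    · funext v
      simp only [Matrix.mulVec, dotProduct, mul_one, Pi.zero_apply]
      by_cases hv : v = j
      · subst hv
        simp [Pi.single_apply, Finset.sum_sub_distrib]
      · have : ∀ w, M.updateRow j (Pi.single i 1 - Pi.single i' 1) v w = M v w :=
          fun w => by rw [Matrix.updateRow_ne hv]
        simp only [this]
        exact hrow v
  rw [h0, add_zero]

variable (D : Multidigraph)

/-- The out-degree Laplacian of `D`, over `ℚ`. -/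
noncomputable def Lap : Matrix D.V D.V ℚ :=
  Matrix.of fun v w => ∑ e : D.E, if D.first e = v then
    ((if w = v then (1 : ℚ) else 0) - (if w = D.last e then 1 else 0)) else 0

lemma Lap_rowSum (v : D.V) : ∑ w, Lap D v w = 0 := by
  classical
  show ∑ w, ∑ e : D.E, (if D.first e = v then
    ((if w = v then (1 : ℚ) else 0) - (if w = D.last e then 1 else 0)) else 0) = 0
  rw [Finset.sum_comm]
  refine Finset.sum_eq_zero fun e _ => ?_
  by_cases he : D.first e = v
  · simp only [he, if_true, Finset.sum_sub_distrib]
    simp [Finset.sum_ite_eq']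
  · simp [he]

lemma Lap_colSum (hD : ∀ v, D.indeg v = D.outdeg v) (w : D.V) : ∑ v, Lap D v w = 0 := by
  classical
  show ∑ v, ∑ e : D.E, (if D.first e = v then
    ((if w = v then (1 : ℚ) else 0) - (if w = D.last e then 1 else 0)) else 0) = 0
  rw [Finset.sum_comm]
  have hterm : ∀ e : D.E, (∑ v : D.V, if D.first e = v then
      ((if w = v then (1 : ℚ) else 0) - (if w = D.last e then 1 else 0)) else 0)
      = (if w = D.first e then (1 : ℚ) else 0) - (if w = D.last e then 1 else 0) := by
    intro e
    rw [Finset.sum_ite_eq]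
    simp
  rw [Finset.sum_congr rfl fun e _ => hterm e, Finset.sum_sub_distrib]
  have hout : ∑ e : D.E, (if w = D.first e then (1 : ℚ) else 0) = (D.outdeg w : ℚ) := by
    rw [Finset.sum_boole, Multidigraph.outdeg, Nat.card_eq_fintype_card, Fintype.card_subtype]
    norm_num
    congr 1
    apply Finset.filter_congr
    intro e _
    simp [eq_comm]
  have hin : ∑ e : D.E, (if w = D.last e then (1 : ℚ) else 0) = (D.indeg w : ℚ) := by
    rw [Finset.sum_boole, Multidigraph.indeg, Nat.card_eq_fintype_card, Fintype.card_subtype]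
    norm_num
    congr 1
    apply Finset.filter_congr
    intro e _
    simp [eq_comm]
  rw [hout, hin, hD w, sub_self]

/-- The reduced Laplacian: delete row and column `r`. -/
noncomputable def RLap (r : D.V) : Matrix {v : D.V // v ≠ r} {v : D.V // v ≠ r} ℚ :=
  (Lap D).submatrix Subtype.val Subtype.val

lemma adjugate_Lap_eq_det (r : D.V) : (Lap D).adjugate r r = (RLap D r).det := by
  classical
  rw [Matrix.adjugate_apply]
  let e : {v : D.V // v = r} ⊕ {v : D.V // ¬v = r} ≃ D.V := Equiv.sumCompl (· = r)
  rw [← Matrix.det_submatrix_equiv_self e]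
  have hblocks : ((Lap D).updateRow r (Pi.single r 1)).submatrix e e =
      Matrix.fromBlocks 1 0
        (Matrix.of fun (i : {v : D.V // ¬v = r}) (_ : {v : D.V // v = r}) => Lap D i.1 r)
        (RLap D r) := by
    ext i j
    cases i with
    | inl i =>
      cases j with
      | inl j =>
        have hij : i = j := Subtype.ext (i.2.trans j.2.symm)
        simp [e, Matrix.updateRow_apply, i.2, j.2, Pi.single_apply, hij, Matrix.one_apply]
      | inr j =>
        simp [e, Matrix.updateRow_apply, i.2, Pi.single_apply, j.2]
    | inr i =>
      cases j with
      | inl j =>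
        simp [e, Matrix.updateRow_apply, i.2, j.2, RLap]
      | inr j =>
        simp [e, Matrix.updateRow_apply, i.2, RLap]
  rw [hblocks, Matrix.det_fromBlocks_zero₁₂, Matrix.det_one, one_mul]

/-- The successor map of an out-edge choice `g`. -/
noncomputable def sig (r : D.V) (g : ∀ v : {v : D.V // v ≠ r}, {e : D.E // D.first e = (v : D.V)}) :
    D.V → D.V :=
  fun v => if h : v = r then r else D.last (g ⟨v, h⟩).1

/-- `g` is good if following it from any vertex eventually reaches `r`. -/
def Good (r : D.V) (g : ∀ v : {v : D.V // v ≠ r}, {e : D.E // D.first e = (v : D.V)}) : Prop :=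
  ∀ v : D.V, ∃ k, (sig D r g)^[k] v = r

/-- The per-choice matrix appearing in the multilinear expansion of `det (RLap D r)`. -/
noncomputable def Nmat (r : D.V)
    (g : ∀ v : {v : D.V // v ≠ r}, {e : D.E // D.first e = (v : D.V)}) :
    Matrix {v : D.V // v ≠ r} {v : D.V // v ≠ r} ℚ :=
  Matrix.of fun v w =>
    (if (w : D.V) = v then (1 : ℚ) else 0) - (if (w : D.V) = D.last (g v).1 then 1 else 0)

lemma det_RLap_expand (r : D.V) :
    (RLap D r).det = ∑ g : ∀ v : {v : D.V // v ≠ r}, {e : D.E // D.first e = (v : D.V)},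
      (Nmat D r g).det := by
  classical
  have hrow : RLap D r = Matrix.of fun (v : {v : D.V // v ≠ r}) =>
      ∑ e : {e : D.E // D.first e = (v : D.V)},
        (fun (w : {v : D.V // v ≠ r}) =>
          (if (w : D.V) = v then (1 : ℚ) else 0) - (if (w : D.V) = D.last e.1 then 1 else 0)) := by
    ext v w
    show Lap D v.1 w.1 = _
    show (∑ e : D.E, if D.first e = v.1 then
      ((if (w : D.V) = v then (1 : ℚ) else 0) - (if (w : D.V) = D.last e then 1 else 0)) else 0) = _
    rw [← Finset.sum_filter]
    rw [Finset.sum_subtype (p := fun e => D.first e = (v : D.V))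
      (Finset.filter (fun e => D.first e = (v : D.V)) Finset.univ)
      (by simp) (fun e => (if (w : D.V) = v then (1 : ℚ) else 0) -
        (if (w : D.V) = D.last e then 1 else 0))]
    · simp [Finset.sum_apply]
    · infer_instance
  rw [show (RLap D r).det = Matrix.detRowAlternating (RLap D r) from rfl, hrow]
  exact (Matrix.detRowAlternating.toMultilinearMap.map_sum
    (g := fun (v : {v : D.V // v ≠ r}) (e : {e : D.E // D.first e = (v : D.V)}) =>
      (fun (w : {v : D.V // v ≠ r}) =>
        (if (w : D.V) = v then (1 : ℚ) else 0) - (if (w : D.V) = D.last e.1 then 1 else 0))))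

lemma tele_sum (f : ℕ → ℚ) (i j : ℕ) (h : i ≤ j) :
    ∑ t ∈ Finset.Ico i j, (f t - f (t + 1)) = f i - f j := by
  induction j, h using Nat.le_induction with
  | base => simp
  | succ j hij ih => rw [Finset.sum_Ico_succ_top hij, ih]; ring

lemma det_Nmat_zero (r : D.V) (g : ∀ v : {v : D.V // v ≠ r}, {e : D.E // D.first e = (v : D.V)})
    (hg : ¬ Good D r g) : (Nmat D r g).det = 0 := by
  classical
  rw [Good] at hg; push_neg at hg
  obtain ⟨v₀, hv₀⟩ := hg
  set σ := sig D r g with hσ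
  obtain ⟨i, j, hij, heq⟩ : ∃ i j : ℕ, i < j ∧ σ^[i] v₀ = σ^[j] v₀ := by
    obtain ⟨a, b, hab, heq⟩ := Finite.exists_ne_map_eq_of_infinite (fun k : ℕ => σ^[k] v₀)
    rcases hab.lt_or_gt with h | h
    · exact ⟨a, b, h, heq⟩
    · exact ⟨b, a, h, heq.symm⟩
  have hne : ∀ t, σ^[t] v₀ ≠ r := hv₀
  set u : ℕ → {v : D.V // v ≠ r} := fun t => ⟨σ^[t] v₀, hne t⟩ with hu
  set x : {v : D.V // v ≠ r} → ℚ := fun w => ∑ t ∈ Finset.Ico i j, (if u t = w then (1 : ℚ) else 0)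
    with hx
  apply Matrix.exists_vecMul_eq_zero_iff.mp
  refine ⟨x, ?_, ?_⟩
  · intro h0
    have h1 : (1 : ℚ) ≤ x (u i) := by
      have hs := Finset.single_le_sum (f := fun t => (if u t = u i then (1 : ℚ) else 0))
        (fun t _ => by positivity) (Finset.mem_Ico.mpr ⟨le_refl i, hij⟩)
      have hs' : (if u i = u i then (1 : ℚ) else 0)
          ≤ ∑ t ∈ Finset.Ico i j, (if u t = u i then (1 : ℚ) else 0) := hs
      rw [if_pos rfl] at hs'
      exact hs'
    rw [h0] at h1
    simp only [Pi.zero_apply] at h1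
    norm_num at h1
  · funext w
    show ∑ v, x v * (Nmat D r g) v w = 0
    have step1 : ∀ v : {v : D.V // v ≠ r}, x v * (Nmat D r g) v w
        = ∑ t ∈ Finset.Ico i j, (if u t = v then (Nmat D r g) v w else 0) := by
      intro v
      rw [hx, Finset.sum_mul]
      congr 1; funext t
      rw [ite_mul, one_mul, zero_mul]
    rw [Finset.sum_congr rfl fun v _ => step1 v, Finset.sum_comm]
    have step2 : ∀ t, ∑ v : {v : D.V // v ≠ r}, (if u t = v then (Nmat D r g) v w else 0)
        = (Nmat D r g) (u t) w := by
      intro t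
      simp [Finset.sum_ite_eq]
    rw [Finset.sum_congr rfl fun t _ => step2 t]
    have step3 : ∀ t, (Nmat D r g) (u t) w
        = (if (w : D.V) = σ^[t] v₀ then (1 : ℚ) else 0)
          - (if (w : D.V) = σ^[t+1] v₀ then (1 : ℚ) else 0) := by
      intro t
      have hlast : D.last (g (u t)).1 = σ^[t+1] v₀ := by
        rw [Function.iterate_succ_apply']
        show D.last (g (u t)).1 = σ (σ^[t] v₀)
        rw [hσ]
        show D.last (g (u t)).1 = sig D r g (σ^[t] v₀)
        rw [sig, dif_neg (hne t)]
      show (if (w : D.V) = (u t : D.V) then (1 : ℚ) else 0)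
          - (if (w : D.V) = D.last (g (u t)).1 then 1 else 0) = _
      rw [hlast]
    rw [Finset.sum_congr rfl fun t _ => step3 t,
      tele_sum (fun t => if (w : D.V) = σ^[t] v₀ then (1 : ℚ) else 0) i j hij.le]
    rw [heq]
    simp

lemma det_Nmat_one (r : D.V) (g : ∀ v : {v : D.V // v ≠ r}, {e : D.E // D.first e = (v : D.V)})
    (hg : Good D r g) : (Nmat D r g).det = 1 := by
  classical
  set σ := sig D r g with hσ
  set h : D.V → ℕ := fun v => Nat.find (hg v) with hh
  have hfind : ∀ v, σ^[h v] v = r := fun v => Nat.find_spec (hg v)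
  have hsig : ∀ (v : {v : D.V // v ≠ r}), D.last (g v).1 = σ (v : D.V) := by
    intro v
    rw [hσ]
    show _ = sig D r g (v : D.V)
    rw [sig, dif_neg v.2]
  have hlt : ∀ v : D.V, v ≠ r → h (σ v) < h v := by
    intro v hv
    have h0 : h v ≠ 0 := by
      intro h0
      exact hv (by simpa [h0] using hfind v)
    have hpred : h v - 1 + 1 = h v := by omega
    have hit : σ^[h v - 1] (σ v) = r := by
      calc σ^[h v - 1] (σ v) = σ^[h v - 1 + 1] v := (Function.iterate_succ_apply σ _ v).symm
        _ = r := by rw [hpred]; exact hfind v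
    have h2 : h (σ v) ≤ h v - 1 := Nat.find_min' (hg (σ v)) hit
    have h3 : 1 ≤ h v := Nat.one_le_iff_ne_zero.mpr h0
    omega
  rw [← Matrix.det_transpose]
  have hbt : ((Nmat D r g)ᵀ).BlockTriangular (fun v : {v : D.V // v ≠ r} => h (v : D.V)) := by
    intro a b hba
    have hba' : h (b : D.V) < h (a : D.V) := hba
    show (if (a : D.V) = b then (1 : ℚ) else 0) - (if (a : D.V) = D.last (g b).1 then 1 else 0) = 0
    have h1 : (a : D.V) ≠ (b : D.V) := by
      intro hh'
      rw [hh'] at hba'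
      exact lt_irrefl _ hba'
    have h2 : (a : D.V) ≠ D.last (g b).1 := by
      rw [hsig b]
      intro hh'
      have h4 := hlt (b : D.V) b.2
      rw [← hh'] at h4
      omega
    simp [h1, h2]
  rw [hbt.det]
  apply Finset.prod_eq_one
  intro k _
  have hone : ((Nmat D r g)ᵀ.toSquareBlock (fun v => h (v : D.V)) k) = 1 := by
    ext a b
    show (Nmat D r g) (b : {v : D.V // v ≠ r}) (a : {v : D.V // v ≠ r}) = _
    by_cases hab : a = b
    · subst hab
      have hdiag : ((a : {v : D.V // v ≠ r}) : D.V) ≠ D.last (g a.1).1 := by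
        rw [hsig]
        intro hh'
        have := hlt ((a : {v : D.V // v ≠ r}) : D.V) a.1.2
        rw [← hh'] at this
        omega
      show (if ((a.1 : D.V)) = (a.1 : D.V) then (1:ℚ) else 0)
        - (if ((a.1 : D.V)) = D.last (g a.1).1 then 1 else 0) = (1 : Matrix _ _ ℚ) a a
      simp [hdiag, Matrix.one_apply]
    · have hne1 : ((a.1 : D.V)) ≠ (b.1 : D.V) := by
        intro hh'
        exact hab (Subtype.ext (Subtype.ext hh'))
      have hne2 : ((a.1 : D.V)) ≠ D.last (g b.1).1 := by
        rw [hsig]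
        intro hh'
        have hlt' := hlt ((b.1 : D.V)) b.1.2
        have ha : h ((a.1 : D.V)) = k := a.2
        have hb : h ((b.1 : D.V)) = k := b.2
        rw [← hh'] at hlt'
        omega
      show (if ((a.1 : D.V)) = (b.1 : D.V) then (1:ℚ) else 0)
        - (if ((a.1 : D.V)) = D.last (g b.1).1 then 1 else 0) = (1 : Matrix _ _ ℚ) a b
      simp [hne1, hne2, Matrix.one_apply, hab]
  rw [hone, Matrix.det_one]

lemma outdegRev_empty (T : Set D.E) (v : D.V) :
    D.outdegRev T ∅ v = Nat.card {e : D.E // e ∈ T ∧ D.first e = v} := by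
  unfold Multidigraph.outdegRev
  apply Nat.card_congr
  apply Equiv.subtypeEquivRight
  intro e
  simp

lemma adj_symm (T : Set D.E) : Symmetric (D.Adj T) := by
  rintro a b ⟨e, he, h⟩
  exact ⟨e, he, h.symm⟩

lemma reach_symm (T : Set D.E) {a b : D.V} (h : D.Reach T a b) : D.Reach T b a :=
  haveI : Std.Symm (D.Adj T) := ⟨fun a b h => adj_symm D T h⟩
  Std.Symm.symm (r := Relation.ReflTransGen (D.Adj T)) _ _ h

lemma card_Vne (r : D.V) : Nat.card {v : D.V // v ≠ r} = Nat.card D.V - 1 := by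
  classical
  rw [Nat.card_eq_fintype_card, Nat.card_eq_fintype_card]
  have h1 : Fintype.card {v : D.V // ¬ v = r} = Fintype.card D.V - Fintype.card {v : D.V // v = r} :=
    Fintype.card_subtype_compl _
  rw [Fintype.card_subtype_eq] at h1
  exact h1

lemma good_tree (r : D.V) (g : ∀ v : {v : D.V // v ≠ r}, {e : D.E // D.first e = (v : D.V)})
    (hg : Good D r g) :
    D.IsOrientedSpanningTree (Set.range fun v => (g v).1) r := by
  classical
  set T : Set D.E := Set.range (fun v => (g v).1) with hT
  have hinj : Function.Injective (fun v : {v : D.V // v ≠ r} => (g v).1) := by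
    intro v w hvw
    apply Subtype.ext
    rw [← (g v).2, ← (g w).2]
    exact congrArg D.first hvw
  have hsig : ∀ v : {v : D.V // v ≠ r}, D.last (g v).1 = sig D r g (v : D.V) := by
    intro v
    rw [sig, dif_neg v.2]
  -- reachability to the root
  have hreach_root : ∀ (k : ℕ) (v : D.V), (sig D r g)^[k] v = r → D.Reach T v r := by
    intro k
    induction k with
    | zero => intro v hv; rw [Function.iterate_zero_apply] at hv; subst hv; exact .refl
    | succ k ih =>
      intro v hv
      by_cases hvr : v = r
      · subst hvr; exact .refl
      · have hadj : D.Adj T v (sig D r g v) := by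
          refine ⟨(g ⟨v, hvr⟩).1, Set.mem_range_self _, Or.inl ⟨(g ⟨v, hvr⟩).2, ?_⟩⟩
          exact hsig ⟨v, hvr⟩
        refine Relation.ReflTransGen.head hadj (ih _ ?_)
        rw [← Function.iterate_succ_apply]
        exact hv
  have hreach : ∀ a b : D.V, D.Reach T a b := by
    intro a b
    obtain ⟨ka, hka⟩ := hg a
    obtain ⟨kb, hkb⟩ := hg b
    exact (hreach_root ka a hka).trans (reach_symm D T (hreach_root kb b hkb))
  have hcard : Nat.card T = Nat.card D.V - 1 := by
    rw [hT, Nat.card_range_of_injective hinj, card_Vne]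
  have huniq : ∀ (v : D.V) (hv : v ≠ r) (e : D.E), e ∈ T → D.first e = v → e = (g ⟨v, hv⟩).1 := by
    rintro v hv e ⟨w, rfl⟩ hfe
    have hw : w = ⟨v, hv⟩ := Subtype.ext (((g w).2).symm.trans hfe)
    rw [hw]
  refine ⟨⟨hreach, hcard⟩, Set.empty_subset _, ?_, ?_⟩
  · intro v hv
    rw [outdegRev_empty]
    rw [Nat.card_eq_one_iff_unique]
    constructor
    · constructor
      rintro ⟨e, he, hfe⟩ ⟨e', he', hfe'⟩
      apply Subtype.ext
      show e = e'
      rw [huniq v hv e he hfe, huniq v hv e' he' hfe']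
    · exact ⟨⟨(g ⟨v, hv⟩).1, Set.mem_range_self _, (g ⟨v, hv⟩).2⟩⟩
  · rw [outdegRev_empty]
    have : IsEmpty {e : D.E // e ∈ T ∧ D.first e = r} := by
      constructor
      rintro ⟨e, ⟨w, rfl⟩, hfe⟩
      exact w.2 (((g w).2).symm.trans hfe)
    exact Nat.card_of_isEmpty

lemma tree_good (r : D.V) (T : Set D.E) (hT : D.IsOrientedSpanningTree T r) :
    ∃ g : {g : ∀ v : {v : D.V // v ≠ r}, {e : D.E // D.first e = (v : D.V)} // Good D r g},
      Set.range (fun v => ((g.1) v).1) = T := by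
  classical
  obtain ⟨⟨hreach, hcard⟩, -, hout1, hout0⟩ := hT
  have huniq : ∀ v : {v : D.V // v ≠ r}, ∃ e : D.E, (e ∈ T ∧ D.first e = (v : D.V)) ∧
      ∀ e' : D.E, e' ∈ T ∧ D.first e' = (v : D.V) → e' = e := by
    intro v
    have h1 := hout1 v.1 v.2
    rw [outdegRev_empty, Nat.card_eq_one_iff_unique] at h1
    obtain ⟨hss, ⟨e, he⟩⟩ := h1
    refine ⟨e, he, fun e' he' => ?_⟩
    exact congrArg Subtype.val (hss.allEq ⟨e', he'⟩ ⟨e, he⟩)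
  choose F hF hFu using huniq
  set g : ∀ v : {v : D.V // v ≠ r}, {e : D.E // D.first e = (v : D.V)} :=
    fun v => ⟨F v, (hF v).2⟩ with hgdef
  have hmemT : ∀ v, (g v).1 ∈ T := fun v => (hF v).1
  have hnor : ∀ e ∈ T, D.first e ≠ r := by
    intro e he hfe
    have h0 := hout0
    rw [outdegRev_empty] at h0
    have : Nonempty {e : D.E // e ∈ T ∧ D.first e = r} := ⟨⟨e, he, hfe⟩⟩
    have hpos : 0 < Nat.card {e : D.E // e ∈ T ∧ D.first e = r} := Nat.card_pos
    omega
  have hstep : ∀ e ∈ T, D.last e = sig D r g (D.first e) := by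
    intro e he
    have hfe : D.first e ≠ r := hnor e he
    have he' : e = F ⟨D.first e, hfe⟩ := hFu ⟨D.first e, hfe⟩ e ⟨he, rfl⟩
    rw [sig, dif_neg hfe]
    show D.last e = D.last (g ⟨D.first e, hfe⟩).1
    rw [hgdef]
    exact congrArg D.last he'
  set σ := sig D r g with hσ
  set A : D.V → Prop := fun v => ∃ k, σ^[k] v = r with hA
  have hAsig : ∀ v : D.V, v ≠ r → (A v ↔ A (σ v)) := by
    intro v hv
    constructor
    · rintro ⟨k, hk⟩
      have hk0 : k ≠ 0 := by
        intro h0; rw [h0, Function.iterate_zero_apply] at hk; exact hv hk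
      refine ⟨k - 1, ?_⟩
      calc σ^[k-1] (σ v) = σ^[k-1+1] v := (Function.iterate_succ_apply σ _ v).symm
        _ = r := by rw [Nat.sub_add_cancel (Nat.one_le_iff_ne_zero.mpr hk0)]; exact hk
    · rintro ⟨k, hk⟩
      exact ⟨k + 1, by rw [Function.iterate_succ_apply]; exact hk⟩
  have hadj : ∀ a b : D.V, D.Adj T a b → (A a ↔ A b) := by
    rintro a b ⟨e, he, hcase⟩
    have h2 := hstep e he
    rcases hcase with ⟨hfa, hlb⟩ | ⟨hfb, hla⟩
    · subst hfa; subst hlb; rw [h2]; exact hAsig _ (hnor e he)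
    · subst hfb; subst hla; rw [h2]; exact (hAsig _ (hnor e he)).symm
  have hRA : ∀ a b : D.V, D.Reach T a b → (A a ↔ A b) := by
    intro a b hr
    induction hr with
    | refl => exact Iff.rfl
    | tail _ hadj' ih => exact ih.trans (hadj _ _ hadj')
  have hGood : Good D r g := by
    intro v
    exact (hRA v r (hreach v r)).mpr ⟨0, rfl⟩
  refine ⟨⟨g, hGood⟩, ?_⟩
  have hsub : Set.range (fun v => (g v).1) ⊆ T := by
    rintro e ⟨v, rfl⟩; exact hmemT v
  have hinj : Function.Injective (fun v : {v : D.V // v ≠ r} => (g v).1) := by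
    intro v w hvw
    apply Subtype.ext
    rw [← (g v).2, ← (g w).2]
    exact congrArg D.first hvw
  apply Set.eq_of_subset_of_ncard_le hsub _ (Set.toFinite T)
  rw [← Nat.card_coe_set_eq, ← Nat.card_coe_set_eq, hcard,
    Nat.card_range_of_injective hinj, card_Vne]

lemma card_trees (r : D.V) :
    Nat.card {T : Set D.E // D.IsOrientedSpanningTree T r}
      = Nat.card {g : ∀ v : {v : D.V // v ≠ r}, {e : D.E // D.first e = (v : D.V)} // Good D r g} := by
  apply Nat.card_congr
  apply Equiv.symm
  refine Equiv.ofBijective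
    (fun g => ⟨Set.range (fun v => ((g.1) v).1), good_tree D r g.1 g.2⟩) ⟨?_, ?_⟩
  · intro g g' hgg'
    have hR : Set.range (fun v => ((g.1) v).1) = Set.range (fun v => ((g'.1) v).1) :=
      congrArg Subtype.val hgg'
    apply Subtype.ext; funext v
    have hmem : ((g.1) v).1 ∈ Set.range (fun v => ((g'.1) v).1) := by
      rw [← hR]; exact Set.mem_range_self v
    obtain ⟨w, hw⟩ := hmem
    have hvw : w = v := Subtype.ext (by
      have h1 := congrArg D.first hw
      rw [((g'.1) w).2, ((g.1) v).2] at h1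
      exact h1)
    apply Subtype.ext
    rw [← hw, hvw]
  · rintro ⟨T, hT⟩
    obtain ⟨g, hgT⟩ := tree_good D r T hT
    exact ⟨g, Subtype.ext hgT⟩

lemma card_eq_adjugate (r : D.V) :
    (Nat.card {T : Set D.E // D.IsOrientedSpanningTree T r} : ℚ) = (Lap D).adjugate r r := by
  classical
  rw [card_trees D r, adjugate_Lap_eq_det, det_RLap_expand]
  have hterm : ∀ g : ∀ v : {v : D.V // v ≠ r}, {e : D.E // D.first e = (v : D.V)},
      (Nmat D r g).det = if Good D r g then (1 : ℚ) else 0 := by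
    intro g
    by_cases h : Good D r g
    · rw [det_Nmat_one D r g h, if_pos h]
    · rw [det_Nmat_zero D r g h, if_neg h]
  rw [Finset.sum_congr rfl fun g _ => hterm g, Finset.sum_boole,
    Nat.card_eq_fintype_card, Fintype.card_subtype]

end Stmt2Aux


/-- For any Eulerian digraph `D`, the number of oriented spanning
trees of `D` is independent of the choice of root vertex. -/
theorem stmt2 (D : Multidigraph) (hD : D.Eulerian) (r r' : D.V) :
    Nat.card {T : Set D.E // D.IsOrientedSpanningTree T r} =
      Nat.card {T : Set D.E // D.IsOrientedSpanningTree T r'} := by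
  classical
  have hrow := Lap_rowSum D
  have hcol := Lap_colSum D hD.2
  have hne : Nonempty D.V := ⟨r⟩
  have htrans : ∀ i j : D.V, Matrix.adjugate ((Lap D).transpose) i j = (Lap D).adjugate j i := by
    intro i j
    rw [← Matrix.adjugate_transpose, Matrix.transpose_apply]
  have hrowT : ∀ i : D.V, ∑ j, ((Lap D).transpose) i j = 0 := by
    intro i
    simp only [Matrix.transpose_apply]
    exact hcol i
  have h1 : (Lap D).adjugate r r = (Lap D).adjugate r' r :=
    adjugate_row_const (Lap D) hrow r r' r
  have h2 : Matrix.adjugate ((Lap D).transpose) r r' = Matrix.adjugate ((Lap D).transpose) r' r' :=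
    adjugate_row_const (Lap D).transpose hrowT r r' r'
  have key : ((Nat.card {T : Set D.E // D.IsOrientedSpanningTree T r} : ℚ))
      = (Nat.card {T : Set D.E // D.IsOrientedSpanningTree T r'} : ℚ) := by
    rw [card_eq_adjugate D r, card_eq_adjugate D r', h1, ← htrans r r', h2, htrans]
  exact_mod_cast key
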